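/- Let k ∈ ℤ, L, M ≥ 1 integers, and m an integer with 0 ≤ m < M such that for all 0 ≤ ℓ < L the interval [m/M + ℓ·k/(LM), (m+1)/M + ℓ·(k+1)/(LM)) contains no integer. Suppose n is an integer with k/(LM) ≤ f'(n), f'(n+L−1) < (k+1)/(LM) and m/M ≤ {f(n)} < (m+1)/M, where f is increasing and differentiable on [n, n+L−1] with f' monotone. Then for 0 ≤ ℓ < L, ⌊f(n+ℓ)⌋ = ⌊f(n)⌋ + ℓ·⌊k/(LM)⌋ + i_ℓ where the integers i_ℓ satisfy i_0 = 0 and i_{ℓ+1} − i_ℓ ∈ {0,1}. -/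

import Mathlib

theorem stmt_16 (f f' : ℝ → ℝ) (n k : ℤ) (L M : ℕ) (m : ℕ)
    (hL : 1 ≤ L) (hM : 1 ≤ M) (hm : m < M)
    (hgood : ∀ ℓ : ℕ, ℓ < L → ∀ j : ℤ,
      ¬((m : ℝ) / M + ℓ * k / (L * M) ≤ j ∧
        (j : ℝ) < (m + 1 : ℝ) / M + ℓ * (k + 1 : ℝ) / (L * M)))
    (hderiv : ∀ x ∈ Set.Icc (n : ℝ) ((n : ℝ) + L - 1), HasDerivAt f (f' x) x)
    (hmono : MonotoneOn f (Set.Icc (n : ℝ) ((n : ℝ) + L - 1)))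
    (hmono' : MonotoneOn f' (Set.Icc (n : ℝ) ((n : ℝ) + L - 1)))
    (hk1 : (k : ℝ) / (L * M) ≤ f' n)
    (hk2 : f' ((n : ℝ) + L - 1) < (k + 1 : ℝ) / (L * M))
    (hfrac1 : (m : ℝ) / M ≤ Int.fract (f n))
    (hfrac2 : Int.fract (f n) < (m + 1 : ℝ) / M) :
    ∃ i : ℕ → ℤ, i 0 = 0 ∧ (∀ ℓ : ℕ, ℓ + 1 < L → i (ℓ + 1) - i ℓ = 0 ∨ i (ℓ + 1) - i ℓ = 1) ∧
      ∀ ℓ : ℕ, ℓ < L →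
        ⌊f ((n : ℝ) + ℓ)⌋ = ⌊f n⌋ + ℓ * ⌊(k : ℝ) / (L * M)⌋ + i ℓ := by
  have hMpos : (0:ℝ) < M := by exact_mod_cast hM
  have hLMpos : (0:ℝ) < (L:ℝ) * M := by
    have : (0:ℝ) < L := by exact_mod_cast hL
    positivity
  set d : ℝ := (k:ℝ) / (L * M) with hd
  refine ⟨fun ℓ => ⌊(m:ℝ)/M + ℓ * k / (L*M)⌋ - ℓ * ⌊d⌋, ?_, ?_, ?_⟩
  · simp only [Nat.cast_zero, zero_mul, zero_div, add_zero, zero_mul, sub_zero]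
    rw [Int.floor_eq_zero_iff]
    constructor
    · positivity
    · rw [div_lt_one hMpos]; exact_mod_cast hm
  · intro ℓ _
    have hx : ∀ j : ℕ, (m:ℝ)/M + j * k / (L*M) = (m:ℝ)/M + j * d := by
      intro j; rw [hd]; ring
    beta_reduce
    rw [hx, hx]
    set x : ℝ := (m:ℝ)/M + ℓ * d
    have h1 : (m:ℝ)/M + (ℓ+1:ℕ) * d = x + Int.fract d + ⌊d⌋ := by
      push_cast; rw [Int.fract]; ring
    rw [h1, Int.floor_add_intCast]
    have h2 : ⌊x⌋ ≤ ⌊x + Int.fract d⌋ := Int.floor_mono (by linarith [Int.fract_nonneg d])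
    have h3 : ⌊x + Int.fract d⌋ ≤ ⌊x⌋ + 1 := by
      have h4 : ⌊x + Int.fract d⌋ < ⌊x⌋ + 2 := Int.floor_lt.2
        (by push_cast; linarith [Int.lt_floor_add_one x, Int.fract_lt_one d])
      omega
    have hc : ((ℓ+1:ℕ):ℤ) * ⌊d⌋ = (ℓ:ℤ) * ⌊d⌋ + ⌊d⌋ := by push_cast; ring
    omega
  · intro ℓ hℓ
    -- key: ⌊f (n+ℓ)⌋ = ⌊f n⌋ + ⌊m/M + ℓk/(LM)⌋
    set a : ℝ := (m:ℝ)/M + ℓ * k / (L*M) with ha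
    set b : ℝ := (m+1:ℝ)/M + ℓ * (k+1:ℝ) / (L*M) with hb
    have hbound : a ≤ f ((n:ℝ) + ℓ) - ⌊f n⌋ ∧ f ((n:ℝ) + ℓ) - ⌊f n⌋ < b := by
      have hfr : f n - ⌊f n⌋ = Int.fract (f n) := rfl
      rcases Nat.eq_zero_or_pos ℓ with h0 | hpos
      · subst h0
        have hn0 : ((n:ℝ) + ((0:ℕ):ℝ)) = (n:ℝ) := by norm_num
        rw [hn0, hfr, ha, hb]
        have h00 : (((0:ℕ)):ℝ) = 0 := by norm_num
        rw [h00]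
        simp only [zero_mul, zero_div, add_zero]
        exact ⟨hfrac1, hfrac2⟩
      · have hℓR : (1:ℝ) ≤ ℓ := by exact_mod_cast hpos
        have hle : (ℓ:ℝ) ≤ (L:ℝ) - 1 := by
          have : (ℓ:ℝ) + 1 ≤ L := by exact_mod_cast hℓ
          linarith
        have hsub : Set.Icc (n:ℝ) ((n:ℝ) + ℓ) ⊆ Set.Icc (n:ℝ) ((n:ℝ) + L - 1) :=
          Set.Icc_subset_Icc le_rfl (by linarith)
        have hlt : (n:ℝ) < (n:ℝ) + ℓ := by linarith
        have hcont : ContinuousOn f (Set.Icc (n:ℝ) ((n:ℝ) + ℓ)) :=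
          fun x hx => ((hderiv x (hsub hx)).continuousAt).continuousWithinAt
        have hderiv' : ∀ x ∈ Set.Ioo (n:ℝ) ((n:ℝ) + ℓ), HasDerivAt f (f' x) x :=
          fun x hx => hderiv x (hsub (Set.Ioo_subset_Icc_self hx))
        obtain ⟨c, hc, hceq⟩ := exists_hasDerivAt_eq_slope f f' hlt hcont hderiv'
        have hcmem : c ∈ Set.Icc (n:ℝ) ((n:ℝ) + L - 1) :=
          hsub (Set.Ioo_subset_Icc_self hc)
        have hnmem : (n:ℝ) ∈ Set.Icc (n:ℝ) ((n:ℝ) + L - 1) :=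
          ⟨le_rfl, by linarith⟩
        have hLmem : (n:ℝ) + L - 1 ∈ Set.Icc (n:ℝ) ((n:ℝ) + L - 1) :=
          ⟨by linarith, le_rfl⟩
        have hlow : (k:ℝ)/(L*M) ≤ f' c :=
          le_trans hk1 (hmono' hnmem hcmem hc.1.le)
        have hup : f' c < (k+1:ℝ)/(L*M) :=
          lt_of_le_of_lt (hmono' hcmem hLmem hcmem.2) hk2
        have hdiff : f ((n:ℝ) + ℓ) - f n = ℓ * f' c := by
          have h := hceq
          rw [add_sub_cancel_left, eq_div_iff (ne_of_gt (by linarith))] at h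
          linarith [h]
        have hℓpos : (0:ℝ) < ℓ := by linarith
        constructor
        · have : (ℓ:ℝ) * ((k:ℝ)/(L*M)) ≤ ℓ * f' c :=
            mul_le_mul_of_nonneg_left hlow hℓpos.le
          have hx : f ((n:ℝ) + ℓ) - ⌊f n⌋ = Int.fract (f n) + ℓ * f' c := by
            rw [Int.fract]; linarith [hdiff]
          rw [hx, ha]
          have : (ℓ:ℝ) * k / (L*M) = ℓ * ((k:ℝ)/(L*M)) := by ring
          rw [this]
          linarith
        · have : (ℓ:ℝ) * f' c < ℓ * ((k+1:ℝ)/(L*M)) :=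
            (mul_lt_mul_iff_right₀ hℓpos).2 hup
          have hx : f ((n:ℝ) + ℓ) - ⌊f n⌋ = Int.fract (f n) + ℓ * f' c := by
            rw [Int.fract]; linarith [hdiff]
          rw [hx, hb]
          have h5 : (ℓ:ℝ) * (k+1:ℝ) / (L*M) = ℓ * ((k+1:ℝ)/(L*M)) := by ring
          rw [h5]
          linarith
    -- no integer in [a,b) ⇒ floor = ⌊a⌋
    have hfloor : ⌊f ((n:ℝ) + ℓ) - (⌊f n⌋:ℝ)⌋ = ⌊a⌋ := by
      have h1 : ⌊a⌋ ≤ ⌊f ((n:ℝ) + ℓ) - (⌊f n⌋:ℝ)⌋ := Int.floor_mono hbound.1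
      by_contra hne
      have h2 : ⌊a⌋ + 1 ≤ ⌊f ((n:ℝ) + ℓ) - (⌊f n⌋:ℝ)⌋ := by omega
      refine hgood ℓ hℓ ⌊f ((n:ℝ) + ℓ) - (⌊f n⌋:ℝ)⌋ ⟨?_, ?_⟩
      · rw [← ha]
        have h3 : a < (⌊a⌋:ℝ) + 1 := Int.lt_floor_add_one a
        have h4 : ((⌊a⌋:ℝ) + 1) ≤ (⌊f ((n:ℝ) + ℓ) - (⌊f n⌋:ℝ)⌋:ℝ) := by exact_mod_cast h2
        linarith
      · rw [← hb]
        calc (⌊f ((n:ℝ) + ℓ) - (⌊f n⌋:ℝ)⌋:ℝ) ≤ f ((n:ℝ) + ℓ) - ⌊f n⌋ := Int.floor_le _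
          _ < b := hbound.2
    rw [Int.floor_sub_intCast] at hfloor
    beta_reduce
    have : ⌊(m:ℝ)/M + ℓ * k / (L*M)⌋ = ⌊a⌋ := by rw [ha]
    omega
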